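/- Let q₀ ≥ q₁ > 0 and let q : [0,∞) → ℝ be continuous with -q₀² ≤ q(t) ≤ -q₁² for all t ≥ 0. Let y : [0,∞) → ℝ be a positive C² solution of y'' = -q·y with y(t) → 0 as t → ∞. Then the logarithmic derivative u(t) = y'(t)/y(t) satisfies -q₀ ≤ u(t) ≤ -q₁ for all t ≥ 0. -/

import Mathlib

open Filter Set Real

theorem stmt_1 (q₀ q₁ : ℝ) (hq₁ : 0 < q₁) (hq₀ : q₁ ≤ q₀)
    (q y y' y'' : ℝ → ℝ)
    (hqc : Continuous q)
    (hpin : ∀ t, 0 ≤ t → -q₀ ^ 2 ≤ q t ∧ q t ≤ -q₁ ^ 2)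
    (hy : ∀ t, 0 ≤ t → HasDerivAt y (y' t) t)
    (hy' : ∀ t, 0 ≤ t → HasDerivAt y' (y'' t) t)
    (hpos : ∀ t, 0 ≤ t → 0 < y t)
    (heq : ∀ t, 0 ≤ t → y'' t = -(q t) * y t)
    (hlim : Filter.Tendsto y Filter.atTop (nhds 0)) :
    ∀ t, 0 ≤ t → -q₀ ≤ y' t / y t ∧ y' t / y t ≤ -q₁ := by
  have hq₀pos : 0 < q₀ := lt_of_lt_of_le hq₁ hq₀
  have hyc : ContinuousOn y (Set.Ici (0:ℝ)) :=
    fun t ht => (hy t ht).continuousAt.continuousWithinAt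
  have hy'c : ContinuousOn y' (Set.Ici (0:ℝ)) :=
    fun t ht => (hy' t ht).continuousAt.continuousWithinAt
  have hydiff : DifferentiableOn ℝ y (interior (Set.Ici (0:ℝ))) := by
    rw [interior_Ici]
    exact fun t ht => (hy t (le_of_lt ht)).differentiableAt.differentiableWithinAt
  have hy'diff : DifferentiableOn ℝ y' (interior (Set.Ici (0:ℝ))) := by
    rw [interior_Ici]
    exact fun t ht => (hy' t (le_of_lt ht)).differentiableAt.differentiableWithinAt
  have hy''nonneg : ∀ t, 0 ≤ t → 0 ≤ y'' t := by
    intro t ht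
    rw [heq t ht]
    have h1 := (hpin t ht).2
    have h2 := hpos t ht
    nlinarith
  -- y' is monotone on [0, ∞)
  have hmono : MonotoneOn y' (Set.Ici (0:ℝ)) := by
    apply monotoneOn_of_deriv_nonneg (convex_Ici 0) hy'c hy'diff
    intro x hx
    rw [interior_Ici] at hx
    rw [(hy' x (le_of_lt hx)).deriv]
    exact hy''nonneg x (le_of_lt hx)
  -- y' ≤ 0 on [0, ∞)
  have hy'neg : ∀ t, 0 ≤ t → y' t ≤ 0 := by
    intro t₀ ht₀
    by_contra h
    push_neg at h
    have hmy : MonotoneOn y (Set.Ici t₀) := by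
      apply monotoneOn_of_deriv_nonneg (convex_Ici t₀)
        (hyc.mono (Set.Ici_subset_Ici.2 ht₀))
      · intro x hx
        rw [interior_Ici] at hx
        exact (hy x (le_trans ht₀ (le_of_lt hx))).differentiableAt.differentiableWithinAt
      · intro x hx
        rw [interior_Ici] at hx
        have hx0 : (0:ℝ) ≤ x := le_trans ht₀ (le_of_lt hx)
        rw [(hy x hx0).deriv]
        have := hmono (Set.mem_Ici.2 ht₀) (Set.mem_Ici.2 hx0) (le_of_lt hx)
        linarith
    have hev : ∀ᶠ s in atTop, y s < y t₀ :=
      hlim.eventually_lt_const (hpos t₀ ht₀)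
    obtain ⟨s, hs1, hs2⟩ := (hev.and (eventually_ge_atTop t₀)).exists
    have := hmy (Set.mem_Ici.2 le_rfl) (Set.mem_Ici.2 hs2) hs2
    linarith
  -- y' tends to 0
  have hy'lim : Tendsto y' atTop (nhds 0) := by
    set z : ℝ → ℝ := fun t => y' (max t 0) with hz
    have hzmono : Monotone z := fun a b hab =>
      hmono (le_max_right a 0) (le_max_right b 0) (max_le_max hab le_rfl)
    have hzle : ∀ t, z t ≤ 0 := fun t => hy'neg _ (le_max_right t 0)
    have hbdd : BddAbove (Set.range z) := ⟨0, by rintro _ ⟨t, rfl⟩; exact hzle t⟩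
    have hzt := tendsto_atTop_ciSup hzmono hbdd
    set L := ⨆ t, z t with hLdef
    have hLle : L ≤ 0 := ciSup_le hzle
    have hzleL : ∀ t, z t ≤ L := fun t => le_ciSup hbdd t
    have hL0 : L = 0 := by
      by_contra hne
      have hL : L < 0 := lt_of_le_of_ne hLle hne
      have key := (convex_Ici (0:ℝ)).image_sub_le_mul_sub_of_deriv_le hyc hydiff
        (C := L) ?_ 0 (Set.mem_Ici.2 le_rfl)
      · set s := (y 0 + 1) / (-L) with hsdef
        have hy0 : 0 < y 0 := hpos 0 le_rfl
        have hs : (0:ℝ) ≤ s := div_nonneg (by linarith) (by linarith)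
        have h1 := key s (Set.mem_Ici.2 hs) hs
        have hLs : L * (s - 0) = -(y 0 + 1) := by
          have hLne : (-L) ≠ 0 := ne_of_gt (by linarith)
          rw [hsdef, sub_zero, mul_div_assoc', mul_comm, mul_div_assoc, div_neg,
            div_self (show L ≠ 0 from ne_of_lt hL)]
          ring
        have := hpos s hs
        rw [hLs] at h1
        linarith
      · intro x hx
        rw [interior_Ici] at hx
        rw [(hy x (le_of_lt hx)).deriv]
        have := hzleL x
        rw [hz] at this
        simpa [max_eq_left (show (0:ℝ) ≤ x from le_of_lt hx)] using this
    have : Tendsto z atTop (nhds 0) := hL0 ▸ hzt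
    refine this.congr' ?_
    filter_upwards [eventually_ge_atTop (0:ℝ)] with t ht
    simp [hz, max_eq_left ht]
  -- general exponential-weighted function machinery for c > 0
  have hderiv : ∀ c : ℝ, ∀ t, 0 ≤ t →
      HasDerivAt (fun s => Real.exp (-c * s) * (y' s + c * y s))
        (Real.exp (-c * t) * (y'' t - c ^ 2 * y t)) t := by
    intro c t ht
    have h1 : HasDerivAt (fun s => Real.exp (-c * s)) (Real.exp (-c * t) * (-c * 1)) t :=
      ((hasDerivAt_id t).const_mul (-c)).exp
    have h2 : HasDerivAt (fun s => y' s + c * y s) (y'' t + c * y' t) t :=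
      (hy' t ht).add ((hy t ht).const_mul c)
    have := h1.mul h2
    refine this.congr_deriv ?_
    ring
  have hcont : ∀ c : ℝ, ContinuousOn (fun s => Real.exp (-c * s) * (y' s + c * y s))
      (Set.Ici (0:ℝ)) := by
    intro c
    exact (Real.continuous_exp.comp (continuous_const.mul continuous_id)).continuousOn.mul
      (hy'c.add (continuousOn_const.mul hyc))
  have hdiffOn : ∀ c : ℝ, DifferentiableOn ℝ (fun s => Real.exp (-c * s) * (y' s + c * y s))
      (interior (Set.Ici (0:ℝ))) := by
    intro c
    rw [interior_Ici]
    exact fun t ht => (hderiv c t (le_of_lt ht)).differentiableAt.differentiableWithinAt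
  have hlim' : ∀ c : ℝ, 0 < c →
      Tendsto (fun s => Real.exp (-c * s) * (y' s + c * y s)) atTop (nhds 0) := by
    intro c hc
    have he : Tendsto (fun s => Real.exp (-c * s)) atTop (nhds 0) := by
      have := Real.tendsto_exp_neg_atTop_nhds_zero.comp
        (Filter.Tendsto.const_mul_atTop hc tendsto_id)
      refine this.congr fun s => ?_
      simp [neg_mul, Function.comp]
    have hg : Tendsto (fun s => y' s + c * y s) atTop (nhds 0) := by
      have := hy'lim.add (hlim.const_mul c)
      simpa using this
    simpa using he.mul hg
  intro t ht
  have hyt := hpos t ht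
  constructor
  · -- lower bound: H = exp(-q₀ s)(y' + q₀ y) is antitone with limit 0, so ≥ 0
    set H : ℝ → ℝ := fun s => Real.exp (-q₀ * s) * (y' s + q₀ * y s) with hH
    have hanti : AntitoneOn H (Set.Ici (0:ℝ)) := by
      apply antitoneOn_of_deriv_nonpos (convex_Ici 0) (hcont q₀) (hdiffOn q₀)
      intro x hx
      rw [interior_Ici] at hx
      have hx0 : (0:ℝ) ≤ x := le_of_lt hx
      rw [(hderiv q₀ x hx0).deriv]
      have h1 := (hpin x hx0).1
      have h2 := hpos x hx0
      have h3 := heq x hx0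
      have h4 : y'' x - q₀ ^ 2 * y x ≤ 0 := by nlinarith
      have h5 : (0:ℝ) < Real.exp (-q₀ * x) := Real.exp_pos _
      nlinarith
    have h0le : 0 ≤ H t := by
      refine le_of_tendsto (hlim' q₀ hq₀pos) ?_
      filter_upwards [eventually_ge_atTop t, eventually_ge_atTop (0:ℝ)] with s hs1 hs2
      exact hanti (Set.mem_Ici.2 ht) (Set.mem_Ici.2 hs2) hs1
    have hexp : (0:ℝ) < Real.exp (-q₀ * t) := Real.exp_pos _
    have : 0 ≤ y' t + q₀ * y t := nonneg_of_mul_nonneg_right h0le hexp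
    rw [le_div_iff₀ hyt]
    linarith
  · -- upper bound: G = exp(-q₁ s)(y' + q₁ y) is monotone with limit 0, so ≤ 0
    set G : ℝ → ℝ := fun s => Real.exp (-q₁ * s) * (y' s + q₁ * y s) with hG
    have hmonoG : MonotoneOn G (Set.Ici (0:ℝ)) := by
      apply monotoneOn_of_deriv_nonneg (convex_Ici 0) (hcont q₁) (hdiffOn q₁)
      intro x hx
      rw [interior_Ici] at hx
      have hx0 : (0:ℝ) ≤ x := le_of_lt hx
      rw [(hderiv q₁ x hx0).deriv]
      have h1 := (hpin x hx0).2
      have h2 := hpos x hx0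
      have h3 := heq x hx0
      have h4 : 0 ≤ y'' x - q₁ ^ 2 * y x := by nlinarith
      have h5 : (0:ℝ) < Real.exp (-q₁ * x) := Real.exp_pos _
      nlinarith
    have h0ge : G t ≤ 0 := by
      refine ge_of_tendsto (hlim' q₁ hq₁) ?_
      filter_upwards [eventually_ge_atTop t, eventually_ge_atTop (0:ℝ)] with s hs1 hs2
      exact hmonoG (Set.mem_Ici.2 ht) (Set.mem_Ici.2 hs2) hs1
    have hexp : (0:ℝ) < Real.exp (-q₁ * t) := Real.exp_pos _
    have : y' t + q₁ * y t ≤ 0 := nonpos_of_mul_nonpos_right h0ge hexp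
    rw [div_le_iff₀ hyt]
    linarith
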